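/- Let M be a factor and α : G → Out(M) a homomorphism (an outer action). Choose a lift a_g ∈ Aut(M) of α_g for each g with a_e = id. Then there exist unitaries u(g,h) ∈ U(M) with a_g a_h = Ad(u(g,h)) a_{gh}, and the expression Ob(α)(g,h,k) := u(g,h) u(gh,k) (a_g(u(h,k)) u(g,hk))⁻¹ lies in the center T of U(M) and defines a 3-cocycle on G with values in T whose class in H³(G, T) is independent of all choices. This class Ob(α) (the obstruction) vanishes if and only if α lifts to a cocycle crossed action realizable as a genuine action after perturbation, i.e. iff α admits a lift to a homomorphism-up-to-coboundary. -/
import Mathlib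


/-- `(a, u)` is a lifting pair for the outer action `α : G → A ⧸ I`, `I = Ad.range`. -/
def LiftPair {U A G : Type*} [Group U] [Group A] [Group G]
    (Ad : U →* A) (α : G → A ⧸ Ad.range) (a : G → A) (u : G → G → U) : Prop :=
  a 1 = 1 ∧ (∀ g : G, (QuotientGroup.mk (a g) : A ⧸ Ad.range) = α g) ∧
    ∀ g h : G, a g * a h = Ad (u g h) * a (g * h)

/-- The obstruction `Ob(α)(g,h,k) = u(g,h) u(gh,k) (a_g(u(h,k)) u(g,hk))⁻¹`. -/
def obstr {U A G : Type*} [Group U] [Group A] [Group G]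
    (φ : A →* MulAut U) (a : G → A) (u : G → G → U) : G → G → G → U :=
  fun g h k => u g h * u (g * h) k * (φ (a g) (u h k) * u g (h * k))⁻¹

/-- The 3-coboundary of `c : G × G → T` (trivial action), in multiplicative notation. -/
def cob3 {U G : Type*} [Group U] [Group G] (c : G → G → U) : G → G → G → U :=
  fun g h k => c h k * (c (g * h) k)⁻¹ * c g (h * k) * (c g h)⁻¹

/-- Move a central element across a product (right-associated form). -/
lemma mul_central {U : Type*} [Group U] {t : U} (h : ∀ y : U, t * y = y * t) (x y : U) :
    x * (t * y) = t * (x * y) := by rw [← mul_assoc, ← h, mul_assoc]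

/-- The inverse of a central element is central. -/
lemma inv_central {U : Type*} [Group U] {t : U} (h : ∀ y : U, t * y = y * t) :
    ∀ y : U, t⁻¹ * y = y * t⁻¹ := by
  intro y
  calc t⁻¹ * y = t⁻¹ * (y * t) * t⁻¹ := by group
  _ = t⁻¹ * (t * y) * t⁻¹ := by rw [h y]
  _ = y * t⁻¹ := by group

/-- Core computation for perturbing a 2-cochain by a central 2-cochain. -/
lemma twist_core {U : Type*} [Group U] (d1 d2 d3 d4 x1 x2 x3 x4 : U)
    (h1 : ∀ y, d1 * y = y * d1) (h2 : ∀ y, d2 * y = y * d2)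
    (h3 : ∀ y, d3 * y = y * d3) (h4 : ∀ y, d4 * y = y * d4) :
    (d1 * x1) * (d2 * x2) * ((d3 * x3) * (d4 * x4))⁻¹ =
      x1 * x2 * (x3 * x4)⁻¹ * (d3 * d2⁻¹ * d4 * d1⁻¹)⁻¹ := by
  have key : ∀ z : U,
      d1 * (x1 * (d2 * (x2 * (x4⁻¹ * (d4⁻¹ * (x3⁻¹ * (d3⁻¹ * z))))))) =
      x1 * (x2 * (x4⁻¹ * (x3⁻¹ * (d1 * (d4⁻¹ * (d2 * (d3⁻¹ * z))))))) := by
    intro z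
    simp only [mul_central h1]
    simp only [mul_central h2]
    simp only [mul_central (inv_central h3)]
    simp only [mul_central (inv_central h4)]
  calc (d1 * x1) * (d2 * x2) * ((d3 * x3) * (d4 * x4))⁻¹
      = d1 * (x1 * (d2 * (x2 * (x4⁻¹ * (d4⁻¹ * (x3⁻¹ * (d3⁻¹ * 1))))))) := by group
    _ = x1 * (x2 * (x4⁻¹ * (x3⁻¹ * (d1 * (d4⁻¹ * (d2 * (d3⁻¹ * 1))))))) := key 1
    _ = x1 * x2 * (x3 * x4)⁻¹ * (d3 * d2⁻¹ * d4 * d1⁻¹)⁻¹ := by group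

/-- Rearrangement of four central elements. -/
lemma comm4 {U : Type*} [Group U] (e1 e2 e3 e4 : U)
    (h1 : ∀ y, e1 * y = y * e1) (h2 : ∀ y, e2 * y = y * e2)
    (h3 : ∀ y, e3 * y = y * e3) (h4 : ∀ y, e4 * y = y * e4) :
    e1⁻¹ * e2 * e3⁻¹ * e4 = (e1 * e2⁻¹ * e3 * e4⁻¹)⁻¹ := by
  have key : ∀ z : U,
      e1⁻¹ * (e2 * (e3⁻¹ * (e4 * z))) = e4 * (e3⁻¹ * (e2 * (e1⁻¹ * z))) := by
    intro z
    simp only [mul_central (inv_central h1)]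
    simp only [mul_central h2]
    simp only [mul_central (inv_central h3)]
  calc e1⁻¹ * e2 * e3⁻¹ * e4 = e1⁻¹ * (e2 * (e3⁻¹ * (e4 * 1))) := by group
    _ = e4 * (e3⁻¹ * (e2 * (e1⁻¹ * 1))) := key 1
    _ = (e1 * e2⁻¹ * e3 * e4⁻¹)⁻¹ := by group

/-- the obstruction of an outer action `α : G → A/I` is a well-defined class
in `H³(G, T)` (`T = ker Ad`, central), independent of all choices, and it vanishes iff
`α` lifts to a genuine cocycle crossed action. -/
theorem stmt3 {U A G : Type*} [Group U] [Group A] [Group G]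
    (Ad : U →* A) (φ : A →* MulAut U)
    (hcomp : ∀ (a : A) (v : U), Ad (φ a v) = a * Ad v * a⁻¹)
    (hfix : ∀ (a : A) (t : U), t ∈ Ad.ker → φ a t = t)
    (hcent : ∀ t ∈ Ad.ker, ∀ v : U, t * v = v * t)
    (hAdconj : ∀ v w : U, φ (Ad v) w = v * w * v⁻¹)
    (hfactor : Ad.ker = Subgroup.center U)
    [hnor : Ad.range.Normal]
    (α : G →* A ⧸ Ad.range) :
    -- a lifting pair exists:
    (∃ (a : G → A) (u : G → G → U), LiftPair Ad α a u) ∧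
    -- for any lifting pair, the obstruction is a T-valued 3-cocycle, and its class in
    -- H³(G, T) does not depend on the choice of the lifting pair:
    (∀ (a : G → A) (u : G → G → U), LiftPair Ad α a u →
      (∀ g h k : G, obstr φ a u g h k ∈ Ad.ker) ∧
      (∀ g h k l : G,
        obstr φ a u h k l * obstr φ a u g (h * k) l * obstr φ a u g h k =
          obstr φ a u (g * h) k l * obstr φ a u g h (k * l)) ∧
      (∀ (a' : G → A) (u' : G → G → U), LiftPair Ad α a' u' →
        ∃ c : G → G → U, (∀ g h : G, c g h ∈ Ad.ker) ∧
          ∀ g h k : G, obstr φ a' u' g h k = obstr φ a u g h k * cob3 c g h k)) ∧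
    -- the obstruction class vanishes iff α lifts to a genuine cocycle crossed action:
    (∀ (a : G → A) (u : G → G → U), LiftPair Ad α a u →
      ((∃ c : G → G → U, (∀ g h : G, c g h ∈ Ad.ker) ∧
          ∀ g h k : G, obstr φ a u g h k = cob3 c g h k) ↔
        ∃ (a' : G → A) (u' : G → G → U), LiftPair Ad α a' u' ∧
          ∀ g h k : G,
            u' g h * u' (g * h) k = φ (a' g) (u' h k) * u' g (h * k))) := by
  
  classical
  -- basic consequences of a lifting pair
  have hAdu : ∀ (a : G → A) (u : G → G → U), LiftPair Ad α a u →
      ∀ g h : G, Ad (u g h) = a g * a h * (a (g * h))⁻¹ := by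
    intro a u hL g h
    rw [hL.2.2 g h]; group
  have hker : ∀ (a : G → A) (u : G → G → U), LiftPair Ad α a u →
      ∀ g h k : G, obstr φ a u g h k ∈ Ad.ker := by
    intro a u hL g h k
    have : Ad (obstr φ a u g h k) = 1 := by
      simp only [obstr, map_mul, map_inv]
      simp only [hcomp]
      simp only [hAdu a u hL]
      rw [← mul_assoc g h k]
      group
    exact MonoidHom.mem_ker.mpr this
  -- the defining relation of the obstruction, in two shapes
  have S2 : ∀ (a : G → A) (u : G → G → U) (g h k : G),
      u g h * u (g * h) k = obstr φ a u g h k * (φ (a g) (u h k) * u g (h * k)) := by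
    intro a u g h k
    simp only [obstr, inv_mul_cancel_right]
  have S' : ∀ (a : G → A) (u : G → G → U) (g h k : G) (x : U),
      u g h * (u (g * h) k * x) =
        obstr φ a u g h k * (φ (a g) (u h k) * (u g (h * k) * x)) := by
    intro a u g h k x
    calc u g h * (u (g * h) k * x) = (u g h * u (g * h) k) * x := by group
    _ = (obstr φ a u g h k * (φ (a g) (u h k) * u g (h * k))) * x := by rw [S2 a u g h k]
    _ = _ := by group
  have hconj : ∀ (a : G → A) (u : G → G → U), LiftPair Ad α a u →
      ∀ (g h : G) (x : U),
        φ (a g) (φ (a h) x) = u g h * φ (a (g * h)) x * (u g h)⁻¹ := by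
    intro a u hL g h x
    have h1 := congrArg (fun t : MulAut U => t x) (congrArg φ (hL.2.2 g h))
    simpa only [map_mul, MulAut.mul_apply, hAdconj] using h1
  have hswap' : ∀ (a : G → A) (u : G → G → U), LiftPair Ad α a u →
      ∀ (g h : G) (x y : U),
        u g h * (φ (a (g * h)) x * y) = φ (a g) (φ (a h) x) * (u g h * y) := by
    intro a u hL g h x y
    rw [hconj a u hL g h x]; group
  -- perturbing u by a central 2-cochain changes obstr by an inverse coboundary
  have twist : ∀ (b : G → A) (u d : G → G → U), (∀ g h : G, d g h ∈ Ad.ker) →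
      ∀ g h k : G, obstr φ b (fun p q => d p q * u p q) g h k
        = obstr φ b u g h k * (cob3 d g h k)⁻¹ := by
    intro b u d hd g h k
    simp only [obstr, cob3]
    rw [map_mul, hfix (b g) (d h k) (hd h k)]
    exact twist_core (d g h) (d (g * h) k) (d h k) (d g (h * k)) _ _ _ _
      (hcent _ (hd g h)) (hcent _ (hd (g * h) k)) (hcent _ (hd h k)) (hcent _ (hd g (h * k)))
  have cob3inv : ∀ (c : G → G → U), (∀ g h : G, c g h ∈ Ad.ker) →
      ∀ g h k : G, cob3 (fun p q => (c p q)⁻¹) g h k = (cob3 c g h k)⁻¹ := by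
    intro c hc g h k
    simp only [cob3, inv_inv]
    exact comm4 _ _ _ _ (hcent _ (hc h k)) (hcent _ (hc (g * h) k))
      (hcent _ (hc g (h * k))) (hcent _ (hc g h))
  -- the pentagon (3-cocycle) identity
  have pent : ∀ (a : G → A) (u : G → G → U), LiftPair Ad α a u →
      ∀ g h k l : G,
        obstr φ a u h k l * obstr φ a u g (h * k) l * obstr φ a u g h k =
          obstr φ a u (g * h) k l * obstr φ a u g h (k * l) := by
    intro a u hL g h k l
    have hcω : ∀ g h k : G, ∀ x : U,
        obstr φ a u g h k * x = x * obstr φ a u g h k :=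
      fun g h k => hcent _ (hker a u hL g h k)
    have hfixω : ∀ (b : A) (g h k : G), φ b (obstr φ a u g h k) = obstr φ a u g h k :=
      fun b g h k => hfix b _ (hker a u hL g h k)
    have E3g : ∀ x : U, φ (a g) (u h k) * (φ (a g) (u (h * k) l) * x) =
        obstr φ a u h k l * (φ (a g) (φ (a h) (u k l)) * (φ (a g) (u h (k * l)) * x)) := by
      intro x
      have h1 := congrArg (fun t : U => φ (a g) t) (S2 a u h k l)
      simp only [map_mul] at h1
      rw [hfixω (a g) h k l] at h1
      calc φ (a g) (u h k) * (φ (a g) (u (h * k) l) * x)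
          = (φ (a g) (u h k) * φ (a g) (u (h * k) l)) * x := by group
        _ = (obstr φ a u h k l * (φ (a g) (φ (a h) (u k l)) * φ (a g) (u h (k * l)))) * x := by
            rw [h1]
        _ = _ := by group
    have way1 : ∀ z : U, u g h * (u (g * h) k * (u (g * (h * k)) l * z)) =
        obstr φ a u g h k * (obstr φ a u g (h * k) l * (obstr φ a u h k l *
          (φ (a g) (φ (a h) (u k l)) * (φ (a g) (u h (k * l)) * (u g (h * (k * l)) * z))))) := by
      intro z
      rw [S' a u g h k]
      rw [S' a u g (h * k) l]
      rw [mul_assoc h k l]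
      rw [mul_central (hcω g (h * k) l) (φ (a g) (u h k))]
      rw [E3g]
    have way2 : ∀ z : U, u g h * (u (g * h) k * (u (g * (h * k)) l * z)) =
        obstr φ a u (g * h) k l * (obstr φ a u g h (k * l) *
          (φ (a g) (φ (a h) (u k l)) * (φ (a g) (u h (k * l)) * (u g (h * (k * l)) * z)))) := by
      intro z
      rw [← mul_assoc g h k]
      rw [S' a u (g * h) k l]
      rw [mul_central (hcω (g * h) k l) (u g h)]
      rw [hswap' a u hL g h (u k l)]
      rw [S' a u g h (k * l)]
      rw [mul_central (hcω g h (k * l)) (φ (a g) (φ (a h) (u k l)))]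
    have E := (way1 1).symm.trans (way2 1)
    have E2 : obstr φ a u g h k * obstr φ a u g (h * k) l * obstr φ a u h k l =
        obstr φ a u (g * h) k l * obstr φ a u g h (k * l) := by
      refine mul_right_cancel (b := φ (a g) (φ (a h) (u k l)) *
        (φ (a g) (u h (k * l)) * (u g (h * (k * l)) * 1))) ?_
      calc (obstr φ a u g h k * obstr φ a u g (h * k) l * obstr φ a u h k l) *
            (φ (a g) (φ (a h) (u k l)) * (φ (a g) (u h (k * l)) * (u g (h * (k * l)) * 1)))
          = obstr φ a u g h k * (obstr φ a u g (h * k) l * (obstr φ a u h k l *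
              (φ (a g) (φ (a h) (u k l)) * (φ (a g) (u h (k * l)) * (u g (h * (k * l)) * 1))))) := by
            group
        _ = obstr φ a u (g * h) k l * (obstr φ a u g h (k * l) *
              (φ (a g) (φ (a h) (u k l)) * (φ (a g) (u h (k * l)) * (u g (h * (k * l)) * 1)))) := E
        _ = _ := by group
    calc obstr φ a u h k l * obstr φ a u g (h * k) l * obstr φ a u g h k
        = obstr φ a u g h k * (obstr φ a u h k l * obstr φ a u g (h * k) l) :=
          (hcω g h k _).symm
      _ = obstr φ a u g h k * (obstr φ a u g (h * k) l * obstr φ a u h k l) := by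
          rw [hcω h k l]
      _ = obstr φ a u g h k * obstr φ a u g (h * k) l * obstr φ a u h k l := by group
      _ = _ := E2
  -- independence of the class from the choice of lifting pair
  have indep : ∀ (a : G → A) (u : G → G → U), LiftPair Ad α a u →
      ∀ (a' : G → A) (u' : G → G → U), LiftPair Ad α a' u' →
        ∃ c : G → G → U, (∀ g h : G, c g h ∈ Ad.ker) ∧
          ∀ g h k : G, obstr φ a' u' g h k = obstr φ a u g h k * cob3 c g h k := by
    intro a u hL a' u' hL'
    -- choose v with a' g = Ad (v g) * a g
    have hex : ∀ g : G, ∃ x : U, a' g = Ad x * a g := by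
      intro g
      have h1 : (QuotientGroup.mk (a g) : A ⧸ Ad.range) = QuotientGroup.mk (a' g) := by
        rw [hL.2.1 g, hL'.2.1 g]
      have h2 : (a g)⁻¹ * a' g ∈ Ad.range := QuotientGroup.eq.mp h1
      have h2' : ((a g)⁻¹ * a' g)⁻¹ ∈ Ad.range := Ad.range.inv_mem h2
      have h3 := hnor.conj_mem _ h2' (a g)
      have h4 : a g * ((a g)⁻¹ * a' g)⁻¹ * (a g)⁻¹ = a g * (a' g)⁻¹ := by group
      rw [h4] at h3
      have h5 : (a g * (a' g)⁻¹)⁻¹ ∈ Ad.range := Ad.range.inv_mem h3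
      obtain ⟨x, hx⟩ := h5
      refine ⟨x, ?_⟩
      rw [hx]; group
    choose v hv using hex
    -- the transported 2-cochain w
    have hAdw : ∀ g h : G,
        Ad (v g * φ (a g) (v h) * u g h * (v (g * h))⁻¹) = a' g * a' h * (a' (g * h))⁻¹ := by
      intro g h
      simp only [map_mul, map_inv, hcomp, hAdu a u hL, hv]
      group
    -- base change: obstr is unchanged when passing from (a,u) to (a',w)
    have hbc : ∀ g h k : G,
        obstr φ a' (fun p q => v p * φ (a p) (v q) * u p q * (v (p * q))⁻¹) g h k =
          obstr φ a u g h k := by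
      intro g h k
      have hcω : ∀ x : U, obstr φ a u g h k * x = x * obstr φ a u g h k :=
        hcent _ (hker a u hL g h k)
      have hstep : obstr φ a' (fun p q => v p * φ (a p) (v q) * u p q * (v (p * q))⁻¹) g h k =
          (v g * φ (a g) (v h) * (u g h * φ (a (g * h)) (v k) * (u g h)⁻¹)) *
            obstr φ a u g h k *
            (v g * φ (a g) (v h) * (u g h * φ (a (g * h)) (v k) * (u g h)⁻¹))⁻¹ := by
        simp only [obstr]
        rw [hv g]
        simp only [map_mul, map_inv, MulAut.mul_apply, hAdconj]
        rw [hconj a u hL g h (v k)]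
        rw [← mul_assoc g h k]
        group
      rw [hstep, mul_assoc, hcω]
      group
    -- difference cochain between u' and w
    have hdker : ∀ g h : G,
        u' g h * (v g * φ (a g) (v h) * u g h * (v (g * h))⁻¹)⁻¹ ∈ Ad.ker := by
      intro g h
      refine MonoidHom.mem_ker.mpr ?_
      rw [map_mul, map_inv, hAdu a' u' hL' g h, hAdw g h]
      group
    refine ⟨fun p q => (u' p q * (v p * φ (a p) (v q) * u p q * (v (p * q))⁻¹)⁻¹)⁻¹,
      fun p q => Ad.ker.inv_mem (hdker p q), ?_⟩
    intro g h k
    calc obstr φ a' u' g h k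
        = obstr φ a' (fun p q =>
            (u' p q * (v p * φ (a p) (v q) * u p q * (v (p * q))⁻¹)⁻¹) *
            (v p * φ (a p) (v q) * u p q * (v (p * q))⁻¹)) g h k := by
          have : u' = fun p q =>
              (u' p q * (v p * φ (a p) (v q) * u p q * (v (p * q))⁻¹)⁻¹) *
              (v p * φ (a p) (v q) * u p q * (v (p * q))⁻¹) := by
            funext p q; group
          rw [← this]
      _ = obstr φ a' (fun p q => v p * φ (a p) (v q) * u p q * (v (p * q))⁻¹) g h k *
            (cob3 (fun p q => u' p q * (v p * φ (a p) (v q) * u p q * (v (p * q))⁻¹)⁻¹)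
              g h k)⁻¹ :=
          twist a' (fun p q => v p * φ (a p) (v q) * u p q * (v (p * q))⁻¹)
            (fun p q => u' p q * (v p * φ (a p) (v q) * u p q * (v (p * q))⁻¹)⁻¹) hdker g h k
      _ = obstr φ a u g h k *
            (cob3 (fun p q => u' p q * (v p * φ (a p) (v q) * u p q * (v (p * q))⁻¹)⁻¹)
              g h k)⁻¹ := by rw [hbc]
      _ = obstr φ a u g h k *
            cob3 (fun p q => (u' p q * (v p * φ (a p) (v q) * u p q * (v (p * q))⁻¹)⁻¹)⁻¹)
              g h k := by
          rw [cob3inv _ hdker g h k]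
  refine ⟨?_, ?_, ?_⟩
  · -- existence of a lifting pair
    have hout : ∀ q : A ⧸ Ad.range, (QuotientGroup.mk q.out : A ⧸ Ad.range) = q := by
      intro q; simp
    set a0 : G → A := fun g => (α g).out * ((α 1).out)⁻¹ with ha0
    have hmk0 : ∀ g : G, (QuotientGroup.mk (a0 g) : A ⧸ Ad.range) = α g := by
      intro g
      have : (QuotientGroup.mk (a0 g) : A ⧸ Ad.range)
          = QuotientGroup.mk ((α g).out) * (QuotientGroup.mk ((α 1).out) : A ⧸ Ad.range)⁻¹ :=
        rfl
      rw [this, hout, hout, map_one, inv_one, mul_one]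
    have hexu : ∀ g h : G, ∃ x : U, Ad x = a0 g * a0 h * (a0 (g * h))⁻¹ := by
      intro g h
      have e1 : (QuotientGroup.mk (a0 g * a0 h) : A ⧸ Ad.range) =
          QuotientGroup.mk (a0 (g * h)) := by
        have : (QuotientGroup.mk (a0 g * a0 h) : A ⧸ Ad.range)
            = (QuotientGroup.mk (a0 g) : A ⧸ Ad.range) * QuotientGroup.mk (a0 h) := rfl
        rw [this, hmk0 g, hmk0 h, hmk0 (g * h), ← map_mul]
      have e2 : (a0 g * a0 h)⁻¹ * a0 (g * h) ∈ Ad.range := QuotientGroup.eq.mp e1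
      have e2' := Ad.range.inv_mem e2
      have e3 := hnor.conj_mem _ e2' (a0 g * a0 h)
      have e4 : a0 g * a0 h * ((a0 g * a0 h)⁻¹ * a0 (g * h))⁻¹ * (a0 g * a0 h)⁻¹ =
          a0 g * a0 h * (a0 (g * h))⁻¹ := by group
      rw [e4] at e3
      exact e3
    choose u0 hu0 using hexu
    refine ⟨a0, u0, ?_, hmk0, ?_⟩
    · show (α 1).out * ((α 1).out)⁻¹ = 1
      group
    · intro g h
      rw [hu0 g h]; group
  · -- properties of the obstruction
    intro a u hL
    exact ⟨hker a u hL, pent a u hL, fun a' u' hL' => indep a u hL a' u' hL'⟩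
  · -- vanishing iff genuine cocycle crossed action
    intro a u hL
    constructor
    · rintro ⟨c, hc, hceq⟩
      refine ⟨a, fun p q => c p q * u p q, ⟨hL.1, hL.2.1, ?_⟩, ?_⟩
      · intro g h
        rw [map_mul, MonoidHom.mem_ker.mp (hc g h), one_mul]
        exact hL.2.2 g h
      · intro g h k
        have h0 : obstr φ a (fun p q => c p q * u p q) g h k = 1 := by
          rw [twist a u c hc g h k, ← hceq g h k]
          group
        simp only [obstr] at h0
        exact mul_inv_eq_one.mp h0
    · rintro ⟨a', u', hL', hid⟩
      have h1 : ∀ g h k : G, obstr φ a' u' g h k = 1 := by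
        intro g h k
        simp only [obstr]
        rw [hid g h k]
        group
      obtain ⟨c, hc, hceq⟩ := indep a u hL a' u' hL'
      refine ⟨fun p q => (c p q)⁻¹, fun p q => Ad.ker.inv_mem (hc p q), ?_⟩
      intro g h k
      have h2 : obstr φ a u g h k * cob3 c g h k = 1 := by
        rw [← hceq g h k]; exact h1 g h k
      have h3 : obstr φ a u g h k = (cob3 c g h k)⁻¹ := eq_inv_of_mul_eq_one_left ?later
      rw [h3, cob3inv c hc g h k]
      case later => exact h2
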